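/- Switching identity for fixed total current: let γ₁ and γ₂ be loops supported in B_N with concatenation γ₁ + γ₂, and let n ∈ 𝒞_{γ₁+γ₂}. Then Σ_{n₁ ∈ 𝒞_{γ₁}, n₁ ≤ n} binom(n, n₁) = 1(∃ q ∈ 𝒞_{γ₁} with q ≤ n) · Σ_{n₁ ∈ 𝒞₀, n₁ ≤ n} binom(n, n₁), where binom(n, n₁) = Π_{p∈C_2(B_N)^+} C(n(p), n₁(p)). -/
import Mathlib


open scoped Classical

namespace LGT

/-- A site (vertex) of the lattice `ℤ^m`. -/
abbrev Site (m : ℕ) := Fin m → ℤ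

/-- The `i`-th unit vector. -/
def unitVec (m : ℕ) (i : Fin m) : Site m := fun j => if j = i then 1 else 0

/-- An oriented nearest-neighbour edge of `ℤ^m`: it joins `base` and `base + e_dir`,
oriented from `base` to `base + e_dir` when `ori = true`, and oppositely otherwise. -/
structure OEdge (m : ℕ) where
  base : Site m
  dir : Fin m
  ori : Bool
deriving DecidableEq

/-- An oriented plaquette of `ℤ^m` (valid when `dir1 < dir2`): the unit square with
corners `base, base + e_dir1, base + e_dir2, base + e_dir1 + e_dir2`, positively
oriented when `ori = true`. -/
structure OPlaq (m : ℕ) where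
  base : Site m
  dir1 : Fin m
  dir2 : Fin m
  ori : Bool
deriving DecidableEq

/-- The same edge with reversed orientation. -/
def OEdge.neg {m : ℕ} (e : OEdge m) : OEdge m := ⟨e.base, e.dir, !e.ori⟩

/-- The same plaquette with reversed orientation. -/
def OPlaq.neg {m : ℕ} (p : OPlaq m) : OPlaq m := ⟨p.base, p.dir1, p.dir2, !p.ori⟩

/-- The source vertex of an oriented edge. -/
def OEdge.src {m : ℕ} (e : OEdge m) : Site m :=
  if e.ori then e.base else e.base + unitVec m e.dir

/-- The target vertex of an oriented edge. -/
def OEdge.tgt {m : ℕ} (e : OEdge m) : Site m :=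
  if e.ori then e.base + unitVec m e.dir else e.base

/-- `x ∈ B_N = [-N,N]^m ∩ ℤ^m`. -/
def inBox (m N : ℕ) (x : Site m) : Prop := ∀ i, |x i| ≤ (N : ℤ)

/-- `C_1(B_N)`: oriented edges with both endpoints in `B_N`. -/
def C1 (m N : ℕ) : Set (OEdge m) :=
  {e | inBox m N e.base ∧ inBox m N (e.base + unitVec m e.dir)}

/-- The four corners of a plaquette. -/
def OPlaq.corners {m : ℕ} (p : OPlaq m) : List (Site m) :=
  [p.base, p.base + unitVec m p.dir1, p.base + unitVec m p.dir2,
    p.base + unitVec m p.dir1 + unitVec m p.dir2]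

/-- The four oriented boundary edges of an oriented plaquette. -/
def OPlaq.bdry {m : ℕ} (p : OPlaq m) : List (OEdge m) :=
  let l : List (OEdge m) :=
    [⟨p.base, p.dir1, true⟩, ⟨p.base + unitVec m p.dir1, p.dir2, true⟩,
     ⟨p.base + unitVec m p.dir2, p.dir1, false⟩, ⟨p.base, p.dir2, false⟩]
  if p.ori then l else l.map OEdge.neg

/-- `C_2(B_N)`: oriented plaquettes with all corners in `B_N`. -/
def C2 (m N : ℕ) : Set (OPlaq m) :=
  {p | p.dir1 < p.dir2 ∧ ∀ x ∈ p.corners, inBox m N x}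

/-- `C_2(B_N)^+`: positively oriented plaquettes of `C_2(B_N)`. -/
def C2plus (m N : ℕ) : Set (OPlaq m) := {p | p ∈ C2 m N ∧ p.ori = true}

/-- `supp ∂̂e`: the plaquettes of `C_2(B_N)` whose oriented boundary contains `e`. -/
def cob (m N : ℕ) (e : OEdge m) : Set (OPlaq m) := {p | p ∈ C2 m N ∧ e ∈ p.bdry}

/-- A loop: a finitely supported `ℤ`-valued function on oriented edges with values in
`{-1,0,1}`, odd under orientation reversal, whose boundary vanishes as a `0`-chain. -/
structure IsLoop (m : ℕ) (γ : OEdge m → ℤ) : Prop where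
  finite_supp : (Function.support γ).Finite
  vals : ∀ e, γ e = -1 ∨ γ e = 0 ∨ γ e = 1
  antisym : ∀ e, γ (OEdge.neg e) = - γ e
  bdry_zero : ∀ v : Site m,
    (∑ᶠ e : OEdge m, γ e *
      ((if OEdge.tgt e = v then 1 else 0) - (if OEdge.src e = v then (1 : ℤ) else 0))) = 0

/-- A loop supported in `B_N`. -/
def LoopIn (m N : ℕ) (γ : OEdge m → ℤ) : Prop :=
  IsLoop m γ ∧ ∀ e, γ e ≠ 0 → e ∈ C1 m N

/-- `Ω^1(B_N, ℤ₂)`: `ℤ₂`-valued one-forms on `C_1(B_N)`. -/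
def Omega1 (m N : ℕ) : Set (OEdge m → ZMod 2) :=
  {σ | (∀ e, e ∉ C1 m N → σ e = 0) ∧ ∀ e, σ (OEdge.neg e) = - σ e}

/-- The natural representation `ρ(g) = e^{iπ g} ∈ {±1}` of `ℤ₂`. -/
noncomputable def rho (g : ZMod 2) : ℝ := if g = 0 then 1 else -1

/-- The exterior derivative `dσ(p) = Σ_{e ∈ ∂p} σ(e)`. -/
def dOne {m : ℕ} (σ : OEdge m → ZMod 2) (p : OPlaq m) : ZMod 2 := (p.bdry.map σ).sum

/-- The Wilson action `S(σ) = -Σ_{p ∈ C_2(B_N)} ρ(dσ(p))`. -/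
noncomputable def action (m N : ℕ) (σ : OEdge m → ZMod 2) : ℝ :=
  - ∑ᶠ p ∈ C2 m N, rho (dOne σ p)

/-- The Wilson loop variable `W_γ(σ) = Π_{e ∈ (supp γ)^+} ρ(σ(e))`. -/
noncomputable def wilson (m : ℕ) (γ : OEdge m → ℤ) (σ : OEdge m → ZMod 2) : ℝ :=
  ∏ᶠ e ∈ {e : OEdge m | γ e ≠ 0 ∧ e.ori = true}, rho (σ e)

/-- `Z_{β,N}[γ] = Σ_{σ ∈ Ω^1(B_N,ℤ₂)} W_γ(σ) e^{-β S(σ)}`. -/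
noncomputable def Z (m N : ℕ) (β : ℝ) (γ : OEdge m → ℤ) : ℝ :=
  ∑ᶠ σ ∈ Omega1 m N, wilson m γ σ * Real.exp (- β * action m N σ)

/-- The finite-volume Gibbs expectation `E_{N,β}[f]`. -/
noncomputable def Eexp (m N : ℕ) (β : ℝ) (f : (OEdge m → ZMod 2) → ℝ) : ℝ :=
  (∑ᶠ σ ∈ Omega1 m N, f σ * Real.exp (- β * action m N σ)) /
    (∑ᶠ σ ∈ Omega1 m N, Real.exp (- β * action m N σ))

/-- `E_{N,β}[W_γ]`. -/
noncomputable def Ewilson (m N : ℕ) (β : ℝ) (γ : OEdge m → ℤ) : ℝ :=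
  Eexp m N β (wilson m γ)

/-- A current: an integer-valued `2`-form on `C_2(B_N)` that is nonnegative on
positively oriented plaquettes. -/
def IsCurrent (m N : ℕ) (n : OPlaq m → ℤ) : Prop :=
  (∀ p, p ∉ C2 m N → n p = 0) ∧ (∀ p, n (OPlaq.neg p) = - n p) ∧
    (∀ p ∈ C2plus m N, 0 ≤ n p)

/-- `𝒞_γ`: the currents with source `γ`. -/
def CurSet (m N : ℕ) (γ : OEdge m → ℤ) : Set (OPlaq m → ℤ) :=
  {n | IsCurrent m N n ∧ ∀ e ∈ C1 m N,
      ((γ e : ZMod 2) + ∑ᶠ p ∈ cob m N e, ((n p : ZMod 2))) = 0}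

/-- The weight `w_β(n) = Π_{p ∈ C_2(B_N)^+} (2β)^{n(p)}/n(p)!` of a current. -/
noncomputable def wgt (m N : ℕ) (β : ℝ) (n : OPlaq m → ℤ) : ℝ :=
  ∏ᶠ p ∈ C2plus m N, (2 * β) ^ (n p).toNat / (Nat.factorial (n p).toNat)

/-- `q ≤ n` on positively oriented plaquettes. -/
def leOn (m N : ℕ) (q n : OPlaq m → ℤ) : Prop := ∀ p ∈ C2plus m N, q p ≤ n p

/-- `𝒫_γ^{ht}`: `ℤ₂`-valued `2`-forms on `C_2(B_N)` with `δω = γ (mod 2)`. -/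
def HTset (m N : ℕ) (γ : OEdge m → ℤ) : Set (OPlaq m → ZMod 2) :=
  {ω | (∀ p, p ∉ C2 m N → ω p = 0) ∧ (∀ p, ω (OPlaq.neg p) = - ω p) ∧
    ∀ e ∈ C1 m N, (∑ᶠ p ∈ cob m N e, ω p) = (γ e : ZMod 2)}

/-- `(supp ω)^+`. -/
def suppPlus (m N : ℕ) (ω : OPlaq m → ZMod 2) : Set (OPlaq m) :=
  {p | p ∈ C2plus m N ∧ ω p ≠ 0}

/-- The high-temperature weight `(tanh 2β)^{|(supp ω)^+|}`. -/
noncomputable def htWeight (m N : ℕ) (β : ℝ) (ω : OPlaq m → ZMod 2) : ℝ :=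
  Real.tanh (2 * β) ^ (Nat.card ↥(suppPlus m N ω))

/-- The high-temperature model `P^γ_{B_N,β}`: probability mass of `ω ∈ 𝒫_γ^{ht}`. -/
noncomputable def htProb (m N : ℕ) (β : ℝ) (γ : OEdge m → ℤ) (ω : OPlaq m → ZMod 2) : ℝ :=
  htWeight m N β ω / ∑ᶠ ω' ∈ HTset m N γ, htWeight m N β ω'

/-- The random current model `𝐏^γ_{B_N,β}`: probability of an event `A ⊆ 𝒞_γ`. -/
noncomputable def rcProb (m N : ℕ) (β : ℝ) (γ : OEdge m → ℤ) (A : Set (OPlaq m → ℤ)) : ℝ :=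
  (∑' n : ↥(CurSet m N γ ∩ A), wgt m N β n) / (∑' n : ↥(CurSet m N γ), wgt m N β n)

/-- The trace `n̂` of a current: the set of positively oriented plaquettes where `n > 0`. -/
def hatCur (m N : ℕ) (n : OPlaq m → ℤ) : Set (OPlaq m) :=
  {p | p ∈ C2plus m N ∧ 0 < n p}

/-- The probability that iid Bernoulli plaquette percolation `Ψ_q` on `C_2(B_N)^+`
produces exactly the configuration (subset) `A`. -/
noncomputable def bernoulli (m N : ℕ) (q : ℝ) (A : Set (OPlaq m)) : ℝ :=
  ∏ᶠ p ∈ C2plus m N, (if p ∈ A then q else 1 - q)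

/-- `∂P ≡ γ (mod 2)`: for every edge `e ∈ C_1(B_N)` the number of plaquettes of `P`
whose boundary contains `e` or `-e` is congruent to `γ(e)` mod `2`. -/
def BdryCong (m N : ℕ) (P : Set (OPlaq m)) (γ : OEdge m → ℤ) : Prop :=
  ∀ e ∈ C1 m N,
    ((Nat.card ↥{p ∈ P | e ∈ p.bdry ∨ OEdge.neg e ∈ p.bdry} : ZMod 2)) = (γ e : ZMod 2)

/-- `𝒫_γ`: subsets of `C_2(B_N)^+` containing a subset with boundary `γ (mod 2)`. -/
def PlaqSet (m N : ℕ) (γ : OEdge m → ℤ) : Set (Set (OPlaq m)) :=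
  {P | P ⊆ C2plus m N ∧ ∃ P', P' ⊆ P ∧ BdryCong m N P' γ}

/-- `N₀(P)`: the number of `σ ∈ Ω^1(B_N,ℤ₂)` with `dσ(p) = 0` for all `p ∈ P`. -/
noncomputable def N0 (m N : ℕ) (P : Set (OPlaq m)) : ℕ :=
  Nat.card ↥{σ ∈ Omega1 m N | ∀ p ∈ P, dOne σ p = 0}

/-- The random cluster weight `N₀(P) q^{|P|} (1-q)^{|C_2(B_N)^+ ∖ P|}`. -/
noncomputable def rcmWeight (m N : ℕ) (q : ℝ) (P : Set (OPlaq m)) : ℝ :=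
  (N0 m N P : ℝ) * q ^ (Nat.card ↥P) * (1 - q) ^ (Nat.card ↥(C2plus m N \ P))

/-- The random cluster model `φ^γ_{B_N,q}`: probability mass of `P` (zero off `𝒫_γ`). -/
noncomputable def rcmProb (m N : ℕ) (q : ℝ) (γ : OEdge m → ℤ) (P : Set (OPlaq m)) : ℝ :=
  (if P ∈ PlaqSet m N γ then rcmWeight m N q P else 0) /
    ∑ᶠ P' ∈ PlaqSet m N γ, rcmWeight m N q P'

/-- `S_γ(P)`: the subsets of `P` with boundary `γ (mod 2)`. -/
def Sset (m N : ℕ) (γ : OEdge m → ℤ) (P : Set (OPlaq m)) : Set (Set (OPlaq m)) :=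
  {P' | P' ⊆ P ∧ BdryCong m N P' γ}

/-- The `ℤ₂`-valued `2`-form whose support among positively oriented plaquettes is `P'`. -/
noncomputable def formOf {m : ℕ} (P' : Set (OPlaq m)) : OPlaq m → ZMod 2 :=
  fun p => if p ∈ P' ∨ OPlaq.neg p ∈ P' then 1 else 0

/-- The vertices of the support of a loop. -/
def vertsOf (m : ℕ) (γ : OEdge m → ℤ) : Set (Site m) :=
  {x | ∃ e, γ e ≠ 0 ∧ (x = OEdge.src e ∨ x = OEdge.tgt e)}

/-- The graph (`ℓ¹`) distance between two sites of `ℤ^m`. -/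
def distL1 (m : ℕ) (x y : Site m) : ℕ := ∑ i, (x i - y i).natAbs

/-- The minimal graph distance between the supports of two loops. -/
noncomputable def suppDist (m : ℕ) (γ γ' : OEdge m → ℤ) : ℕ :=
  sInf {d | ∃ x ∈ vertsOf m γ, ∃ y ∈ vertsOf m γ', d = distL1 m x y}

/-- `area(γ) = min_{n ∈ 𝒞_γ} Σ_{p ∈ C_2(B_N)^+} n(p)`. -/
noncomputable def areaOf (m N : ℕ) (γ : OEdge m → ℤ) : ℕ :=
  sInf {k : ℕ | ∃ n ∈ CurSet m N γ, (∑ᶠ p ∈ C2plus m N, n p) = (k : ℤ)}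

/-- Translation of a loop by a lattice vector. -/
def translate (m : ℕ) (v : Site m) (γ : OEdge m → ℤ) : OEdge m → ℤ :=
  fun e => γ ⟨e.base - v, e.dir, e.ori⟩

/-- The site `a·e₀ + b·e₁` in the fixed coordinate plane spanned by the first two
coordinate directions. -/
def planeSite (m : ℕ) (h : 1 < m) (a b : ℤ) : Site m :=
  fun j => if j = (⟨0, by omega⟩ : Fin m) then a else if j = (⟨1, h⟩ : Fin m) then b else 0

/-- The axis-parallel rectangular loop `γ_{R,T}` with corners `0, R·e₀, R·e₀+T·e₁, T·e₁`
in the fixed coordinate plane spanned by the first two coordinate directions. -/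
noncomputable def rectLoop (m : ℕ) (h : 1 < m) (R T : ℕ) : OEdge m → ℤ := fun e =>
  (∑ k ∈ Finset.range R,
    ((if e = ⟨planeSite m h k 0, ⟨0, by omega⟩, true⟩ then (1 : ℤ) else 0)
      - (if e = OEdge.neg ⟨planeSite m h k 0, ⟨0, by omega⟩, true⟩ then 1 else 0)
      - (if e = ⟨planeSite m h k T, ⟨0, by omega⟩, true⟩ then 1 else 0)
      + (if e = OEdge.neg ⟨planeSite m h k T, ⟨0, by omega⟩, true⟩ then 1 else 0)))
  + (∑ k ∈ Finset.range T,
    ((if e = ⟨planeSite m h R k, ⟨1, h⟩, true⟩ then (1 : ℤ) else 0)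
      - (if e = OEdge.neg ⟨planeSite m h R k, ⟨1, h⟩, true⟩ then 1 else 0)
      - (if e = ⟨planeSite m h 0 k, ⟨1, h⟩, true⟩ then 1 else 0)
      + (if e = OEdge.neg ⟨planeSite m h 0 k, ⟨1, h⟩, true⟩ then 1 else 0)))

section SwitchingAux

variable {m N : ℕ}

lemma OPlaq.neg_neg' (p : OPlaq m) : p.neg.neg = p := by
  simp [OPlaq.neg]

lemma mem_C2_neg {p : OPlaq m} : p.neg ∈ C2 m N ↔ p ∈ C2 m N := Iff.rfl

lemma neg_notMem_C2plus {p : OPlaq m} (hp : p ∈ C2plus m N) : p.neg ∉ C2plus m N := by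
  intro h
  have h1 := hp.2
  have h2 := h.2
  simp only [OPlaq.neg] at h2
  rw [h1] at h2
  simp at h2

lemma neg_mem_C2plus_of_ori_false {p : OPlaq m} (hp : p ∈ C2 m N) (ho : p.ori = false) :
    p.neg ∈ C2plus m N := ⟨mem_C2_neg.mpr hp, by simp [OPlaq.neg, ho]⟩

lemma eq_of_eqOn_C2plus {α : Type*} [AddGroup α] {f g : OPlaq m → α}
    (hf0 : ∀ p, p ∉ C2 m N → f p = 0) (hfa : ∀ p, f p.neg = -f p)
    (hg0 : ∀ p, p ∉ C2 m N → g p = 0) (hga : ∀ p, g p.neg = -g p)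
    (h : ∀ p ∈ C2plus m N, f p = g p) : f = g := by
  funext p
  by_cases hp : p ∈ C2 m N
  · cases hob : p.ori with
    | false =>
      have hneg := neg_mem_C2plus_of_ori_false hp hob
      have hval := h _ hneg
      rw [hfa, hga] at hval
      exact neg_injective hval
    | true => exact h p ⟨hp, hob⟩
  · rw [hf0 p hp, hg0 p hp]

lemma finite_inBox : {x : Site m | inBox m N x}.Finite := by
  apply Set.Finite.subset (Set.Finite.pi (fun _ : Fin m => Set.finite_Icc (-(N : ℤ)) N))
  intro x hx i _
  exact abs_le.mp (hx i)

lemma finite_C2 : (C2 m N).Finite := by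
  have hinj : Function.Injective
      (fun p : OPlaq m => (p.base, p.dir1, p.dir2, p.ori)) := by
    intro p q h
    cases p; cases q; simpa using h
  apply Set.Finite.subset (Set.Finite.preimage hinj.injOn
    (Set.Finite.prod (finite_inBox (m := m) (N := N))
      (Set.finite_univ (α := Fin m × Fin m × Bool))))
  intro p hp
  exact ⟨hp.2 p.base (by simp [OPlaq.corners]), trivial⟩

lemma finite_C2plus : (C2plus m N).Finite := finite_C2.subset fun _ hp => hp.1

noncomputable def SP (m N : ℕ) : Finset (OPlaq m) := (finite_C2plus (m := m) (N := N)).toFinset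

lemma mem_SP {p : OPlaq m} : p ∈ SP m N ↔ p ∈ C2plus m N := Set.Finite.mem_toFinset _

lemma coe_SP : ((SP m N : Finset (OPlaq m)) : Set (OPlaq m)) = C2plus m N :=
  Set.Finite.coe_toFinset _

def Par {m : ℕ} (f : OPlaq m → ℤ) : OPlaq m → ZMod 2 := fun p => ((f p : ZMod 2))

lemma zmod2_cases (x : ZMod 2) : x = 0 ∨ x = 1 := by revert x; decide

lemma zmod2_add_self (x : ZMod 2) : x + x = 0 := by revert x; decide

lemma zmod2_neg (x : ZMod 2) : -x = x := by revert x; decide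

lemma Par_mem_HTset {γ : OEdge m → ℤ} {q : OPlaq m → ℤ} (hq : q ∈ CurSet m N γ) :
    Par q ∈ HTset m N γ := by
  refine ⟨fun p hp => ?_, fun p => ?_, fun e he => ?_⟩
  · simp [Par, hq.1.1 p hp]
  · simp [Par, hq.1.2.1 p]
  · have h := hq.2 e he
    have hS : (∑ᶠ p ∈ cob m N e, ((q p : ZMod 2))) = -(γ e : ZMod 2) := by
      rw [eq_neg_iff_add_eq_zero, add_comm]; exact h
    show (∑ᶠ p ∈ cob m N e, ((q p : ZMod 2))) = (γ e : ZMod 2)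
    rw [hS, zmod2_neg]

lemma curset_of_par {γ : OEdge m → ℤ} {n₁ : OPlaq m → ℤ} (hcur : IsCurrent m N n₁)
    (hpar : Par n₁ ∈ HTset m N γ) : n₁ ∈ CurSet m N γ := by
  refine ⟨hcur, fun e he => ?_⟩
  have h : (∑ᶠ p ∈ cob m N e, ((n₁ p : ZMod 2))) = (γ e : ZMod 2) := hpar.2.2 e he
  rw [h, zmod2_add_self]

lemma finite_cob (e : OEdge m) : (cob m N e).Finite := finite_C2.subset fun _ hp => hp.1

lemma add_mem_HTset_zero {γ : OEdge m → ℤ} {ω ωq : OPlaq m → ZMod 2}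
    (hω : ω ∈ HTset m N γ) (hq : ωq ∈ HTset m N γ) :
    (fun p => ω p + ωq p) ∈ HTset m N (0 : OEdge m → ℤ) := by
  refine ⟨fun p hp => by simp [hω.1 p hp, hq.1 p hp],
    fun p => by simp only [hω.2.1 p, hq.2.1 p]; ring, fun e he => ?_⟩
  show (∑ᶠ p ∈ cob m N e, (ω p + ωq p)) = _
  rw [finsum_mem_add_distrib (finite_cob e), hω.2.2 e he, hq.2.2 e he]
  simp [zmod2_add_self]

lemma add_mem_HTset_gamma {γ : OEdge m → ℤ} {ω ωq : OPlaq m → ZMod 2}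
    (hω : ω ∈ HTset m N (0 : OEdge m → ℤ)) (hq : ωq ∈ HTset m N γ) :
    (fun p => ω p + ωq p) ∈ HTset m N γ := by
  refine ⟨fun p hp => by simp [hω.1 p hp, hq.1 p hp],
    fun p => by simp only [hω.2.1 p, hq.2.1 p]; ring, fun e he => ?_⟩
  show (∑ᶠ p ∈ cob m N e, (ω p + ωq p)) = _
  rw [finsum_mem_add_distrib (finite_cob e), hω.2.2 e he, hq.2.2 e he]
  simp

lemma finite_curle (γ : OEdge m → ℤ) (n : OPlaq m → ℤ) :
    {n₁ : OPlaq m → ℤ | n₁ ∈ CurSet m N γ ∧ leOn m N n₁ n}.Finite := by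
  apply Set.Finite.of_finite_image (f := fun n₁ => fun i : ↥(SP m N) => n₁ ↑i)
  · apply Set.Finite.subset
      (Set.Finite.pi (fun i : ↥(SP m N) => Set.finite_Icc (0 : ℤ) (n ↑i)))
    rintro _ ⟨n₁, hn₁, rfl⟩ i _
    exact ⟨hn₁.1.1.2.2 ↑i (mem_SP.mp i.2), hn₁.2 ↑i (mem_SP.mp i.2)⟩
  · intro f hf g hg hfg
    exact eq_of_eqOn_C2plus hf.1.1.1 hf.1.1.2.1 hg.1.1.1 hg.1.1.2.1
      (fun p hp => congrFun hfg ⟨p, mem_SP.mpr hp⟩)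

lemma finite_HTle (γ : OEdge m → ℤ) : (HTset m N γ).Finite := by
  apply Set.Finite.of_finite_image (f := fun ω => fun i : ↥(SP m N) => ω ↑i)
  · exact Set.toFinite _
  · intro f hf g hg hfg
    exact eq_of_eqOn_C2plus hf.1 hf.2.1 hg.1 hg.2.1
      (fun p hp => congrFun hfg ⟨p, mem_SP.mpr hp⟩)

end SwitchingAux
section SwitchingCore

variable {m N : ℕ}

noncomputable def hfun (n : OPlaq m → ℤ) (p : OPlaq m) (ε : ZMod 2) : ℝ :=
  ∑ k ∈ (Finset.Icc (0 : ℤ) (n p)).filter (fun k : ℤ => ((k : ZMod 2) = ε)),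
    (Nat.choose (n p).toNat k.toNat : ℝ)

lemma nat_parity_choose_sum {b : ℕ} (hb : b ≠ 0) :
    ∑ k ∈ (Finset.range (b + 1)).filter (fun k : ℕ => ((k : ZMod 2) = 0)), (Nat.choose b k : ℝ)
      = ∑ k ∈ (Finset.range (b + 1)).filter (fun k : ℕ => ¬((k : ZMod 2) = 0)),
          (Nat.choose b k : ℝ) := by
  have halt : ∑ k ∈ Finset.range (b + 1), ((-1 : ℝ)) ^ k * (Nat.choose b k : ℝ) = 0 := by
    have h := Int.alternating_sum_range_choose_of_ne hb
    have h2 := congrArg (fun z : ℤ => (z : ℝ)) h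
    push_cast at h2
    simpa using h2
  rw [← Finset.sum_filter_add_sum_filter_not (Finset.range (b + 1))
    (fun k : ℕ => ((k : ZMod 2) = 0))] at halt
  have h1 : ∑ k ∈ (Finset.range (b + 1)).filter (fun k : ℕ => ((k : ZMod 2) = 0)),
      ((-1 : ℝ)) ^ k * (Nat.choose b k : ℝ)
      = ∑ k ∈ (Finset.range (b + 1)).filter (fun k : ℕ => ((k : ZMod 2) = 0)),
          (Nat.choose b k : ℝ) := by
    apply Finset.sum_congr rfl
    intro k hk
    have hk2 := (Finset.mem_filter.mp hk).2
    have hdvd : (2 : ℕ) ∣ k := (ZMod.natCast_eq_zero_iff k 2).mp hk2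
    rw [Even.neg_one_pow ((even_iff_two_dvd).mpr hdvd), one_mul]
  have h2 : ∑ k ∈ (Finset.range (b + 1)).filter (fun k : ℕ => ¬((k : ZMod 2) = 0)),
      ((-1 : ℝ)) ^ k * (Nat.choose b k : ℝ)
      = - ∑ k ∈ (Finset.range (b + 1)).filter (fun k : ℕ => ¬((k : ZMod 2) = 0)),
          (Nat.choose b k : ℝ) := by
    rw [← Finset.sum_neg_distrib]
    apply Finset.sum_congr rfl
    intro k hk
    have hk2 := (Finset.mem_filter.mp hk).2
    have hndvd : ¬ (2 : ℕ) ∣ k := fun h => hk2 ((ZMod.natCast_eq_zero_iff k 2).mpr h)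
    have hodd : Odd k := Nat.not_even_iff_odd.mp (fun h => hndvd (even_iff_two_dvd.mp h))
    rw [Odd.neg_one_pow hodd]
    ring
  rw [h1, h2] at halt
  linarith

lemma hfun_to_nat (n : OPlaq m → ℤ) (p : OPlaq m) (δ : ZMod 2) (hnp : 0 ≤ n p) :
    hfun n p δ = ∑ k ∈ (Finset.range ((n p).toNat + 1)).filter
        (fun k : ℕ => ((k : ZMod 2) = δ)), (Nat.choose (n p).toNat k : ℝ) := by
  unfold hfun
  refine Finset.sum_nbij' (i := fun k => k.toNat) (j := fun k => (k : ℤ)) ?_ ?_ ?_ ?_ ?_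
  · intro a ha
    have h1 := Finset.mem_filter.mp ha
    have h2 := Finset.mem_Icc.mp h1.1
    refine Finset.mem_filter.mpr ⟨Finset.mem_range.mpr ?_, ?_⟩
    · show a.toNat < (n p).toNat + 1
      omega
    · show ((a.toNat : ZMod 2)) = δ
      have h3 : ((a.toNat : ZMod 2)) = (((a.toNat : ℤ) : ZMod 2)) := (Int.cast_natCast _).symm
      rw [h3, Int.toNat_of_nonneg h2.1]
      exact h1.2
  · intro a ha
    have h1 := Finset.mem_filter.mp ha
    have h2 := Finset.mem_range.mp h1.1
    refine Finset.mem_filter.mpr ⟨Finset.mem_Icc.mpr ⟨?_, ?_⟩, ?_⟩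
    · show (0 : ℤ) ≤ (a : ℤ); positivity
    · show (a : ℤ) ≤ n p; omega
    · show (((a : ℤ) : ZMod 2)) = δ
      rw [Int.cast_natCast]
      exact h1.2
  · intro a ha
    have h1 := Finset.mem_filter.mp ha
    have h2 := Finset.mem_Icc.mp h1.1
    show ((a.toNat : ℤ)) = a
    exact Int.toNat_of_nonneg h2.1
  · intro a _
    show ((a : ℤ)).toNat = a
    exact Int.toNat_natCast a
  · intro a ha
    have h1 := Finset.mem_filter.mp ha
    have h2 := Finset.mem_Icc.mp h1.1
    show (((n p).toNat.choose a.toNat : ℝ)) = (((n p).toNat.choose a.toNat : ℝ))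
    rfl

lemma hfun_flip {n : OPlaq m → ℤ} {p : OPlaq m} (hnp : 1 ≤ n p) (ε : ZMod 2) :
    hfun n p ε = hfun n p (ε + 1) := by
  have hb : (n p).toNat ≠ 0 := by omega
  have h0 : 0 ≤ n p := by omega
  have core : ∀ δ : ZMod 2, δ = 0 → hfun n p δ = hfun n p (δ + 1) := by
    intro δ hδ
    subst hδ
    rw [hfun_to_nat n p 0 h0, hfun_to_nat n p (0 + 1) h0]
    rw [nat_parity_choose_sum hb]
    apply Finset.sum_congr
    · apply Finset.filter_congr
      intro k _
      constructor
      · intro h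
        rcases zmod2_cases ((k : ZMod 2)) with h' | h'
        · exact absurd h' h
        · rw [h']; decide
      · intro h h'
        rw [h'] at h
        revert h; decide
    · intros; rfl
  rcases zmod2_cases ε with h | h
  · exact core ε h
  · subst h
    have h11 : (1 : ZMod 2) + 1 = 0 := by decide
    rw [h11]
    exact (core 0 rfl).symm

end SwitchingCore
section SwitchingFiber

variable {m N : ℕ}

noncomputable def extZ (m N : ℕ) (g : OPlaq m → ℤ) : OPlaq m → ℤ := fun p =>
  (if p ∈ C2plus m N then g p else 0) - (if p.neg ∈ C2plus m N then g p.neg else 0)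

noncomputable def glift (m N : ℕ) (g : ↥(SP m N) → ℤ) : OPlaq m → ℤ :=
  fun p => if h : p ∈ SP m N then g ⟨p, h⟩ else 0

lemma extZ_zero (g : OPlaq m → ℤ) {p : OPlaq m} (hp : p ∉ C2 m N) : extZ m N g p = 0 := by
  have h1 : p ∉ C2plus m N := fun h => hp h.1
  have h2 : p.neg ∉ C2plus m N := fun h => hp (mem_C2_neg.mp h.1)
  simp [extZ, h1, h2]

lemma extZ_neg (g : OPlaq m → ℤ) (p : OPlaq m) : extZ m N g p.neg = - extZ m N g p := by
  simp only [extZ, OPlaq.neg_neg']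
  ring

lemma extZ_pos (g : OPlaq m → ℤ) {p : OPlaq m} (hp : p ∈ C2plus m N) : extZ m N g p = g p := by
  simp [extZ, hp, neg_notMem_C2plus hp]

lemma glift_val (g : ↥(SP m N) → ℤ) {p : OPlaq m} (hp : p ∈ C2plus m N) :
    glift m N g p = g ⟨p, mem_SP.mpr hp⟩ := by
  rw [glift, dif_pos (mem_SP.mpr hp)]

lemma fiber_sum_eq (γ : OEdge m → ℤ) (n : OPlaq m → ℤ) {ω : OPlaq m → ZMod 2}
    (hω : ω ∈ HTset m N γ) :
    ∑ n₁ ∈ (finite_curle (m := m) (N := N) γ n).toFinset.filter (fun n₁ => Par n₁ = ω),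
        ∏ p ∈ SP m N, (Nat.choose (n p).toNat ((n₁ p).toNat) : ℝ)
      = ∏ p ∈ SP m N, hfun n p (ω p) := by
  classical
  rw [← Finset.prod_coe_sort (SP m N) (fun p => hfun n p (ω p))]
  have step1 : (∏ i : ↥(SP m N), hfun n (↑i) (ω ↑i))
      = ∑ g ∈ Fintype.piFinset (fun i : ↥(SP m N) =>
          (Finset.Icc (0 : ℤ) (n ↑i)).filter (fun k : ℤ => ((k : ZMod 2) = ω ↑i))),
          ∏ i : ↥(SP m N), (Nat.choose (n ↑i).toNat ((g i).toNat) : ℝ) :=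
    Finset.prod_univ_sum _ _
  rw [step1]
  refine Finset.sum_nbij' (i := fun n₁ => fun i : ↥(SP m N) => n₁ ↑i)
    (j := fun g => extZ m N (glift m N g)) ?_ ?_ ?_ ?_ ?_
  · -- forward membership
    intro n₁ hn₁
    rw [Finset.mem_filter, Set.Finite.mem_toFinset] at hn₁
    refine Fintype.mem_piFinset.mpr fun i => ?_
    refine Finset.mem_filter.mpr ⟨Finset.mem_Icc.mpr
      ⟨hn₁.1.1.1.2.2 ↑i (mem_SP.mp i.2), hn₁.1.2 ↑i (mem_SP.mp i.2)⟩, ?_⟩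
    show ((n₁ ↑i : ℤ) : ZMod 2) = ω ↑i
    exact congrFun hn₁.2 ↑i
  · -- backward membership
    intro g hg
    have hgm := Fintype.mem_piFinset.mp hg
    set n₁ := extZ m N (glift m N g) with hdef
    have hval : ∀ p (hp : p ∈ C2plus m N), n₁ p = g ⟨p, mem_SP.mpr hp⟩ := by
      intro p hp
      rw [hdef, extZ_pos _ hp, glift_val g hp]
    have hrange : ∀ p (hp : p ∈ C2plus m N),
        n₁ p ∈ (Finset.Icc (0 : ℤ) (n p)).filter (fun k : ℤ => ((k : ZMod 2) = ω p)) := by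
      intro p hp
      rw [hval p hp]
      exact hgm ⟨p, mem_SP.mpr hp⟩
    have hpar : Par n₁ = ω := by
      funext p
      by_cases hp : p ∈ C2plus m N
      · have := (Finset.mem_filter.mp (hrange p hp)).2
        exact this
      · by_cases hq : p.neg ∈ C2plus m N
        · have h1 : n₁ p = - n₁ p.neg := by
            have := extZ_neg (N := N) (glift m N g) p
            rw [← hdef] at this
            omega
          have h2 := (Finset.mem_filter.mp (hrange p.neg hq)).2
          show ((n₁ p : ℤ) : ZMod 2) = ω p
          rw [h1]
          push_cast
          rw [h2]
          have h3 : ω p.neg = - ω p := hω.2.1 p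
          rw [h3, neg_neg]
        · have hpc : p ∉ C2 m N := by
            intro hc
            cases hob : p.ori with
            | false => exact hq (neg_mem_C2plus_of_ori_false hc hob)
            | true => exact hp ⟨hc, hob⟩
          have h1 : n₁ p = 0 := by rw [hdef]; exact extZ_zero _ hpc
          show ((n₁ p : ℤ) : ZMod 2) = ω p
          rw [h1, hω.1 p hpc]
          simp
    have hcur : IsCurrent m N n₁ := by
      refine ⟨fun p hp => by rw [hdef]; exact extZ_zero _ hp,
        fun p => by rw [hdef]; exact extZ_neg _ p, fun p hp => ?_⟩
      have := (Finset.mem_filter.mp (hrange p hp)).1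
      exact (Finset.mem_Icc.mp this).1
    rw [Finset.mem_filter, Set.Finite.mem_toFinset]
    refine ⟨⟨curset_of_par hcur (hpar ▸ hω), fun p hp => ?_⟩, hpar⟩
    exact (Finset.mem_Icc.mp (Finset.mem_filter.mp (hrange p hp)).1).2
  · -- left inverse
    intro n₁ hn₁
    rw [Finset.mem_filter, Set.Finite.mem_toFinset] at hn₁
    show extZ m N (glift m N (fun i : ↥(SP m N) => n₁ ↑i)) = n₁
    refine eq_of_eqOn_C2plus (fun p hp => extZ_zero _ hp) (extZ_neg _)
      hn₁.1.1.1.1 hn₁.1.1.1.2.1 ?_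
    intro p hp
    rw [extZ_pos _ hp, glift_val _ hp]
  · -- right inverse
    intro g hg
    funext i
    show extZ m N (glift m N g) ↑i = g i
    rw [extZ_pos _ (mem_SP.mp i.2), glift_val _ (mem_SP.mp i.2)]
  · -- weights
    intro n₁ hn₁
    exact (Finset.prod_coe_sort (SP m N)
      (fun p => (Nat.choose (n p).toNat ((n₁ p).toNat) : ℝ))).symm

end SwitchingFiber
section SwitchingFinal

variable {m N : ℕ}

lemma cur_sum_eq (γ : OEdge m → ℤ) (n : OPlaq m → ℤ) :
    ∑ n₁ ∈ (finite_curle (m := m) (N := N) γ n).toFinset,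
        ∏ p ∈ SP m N, (Nat.choose (n p).toNat ((n₁ p).toNat) : ℝ)
      = ∑ ω ∈ (finite_HTle (m := m) (N := N) γ).toFinset, ∏ p ∈ SP m N, hfun n p (ω p) := by
  classical
  have hmap : ∀ n₁ ∈ (finite_curle (m := m) (N := N) γ n).toFinset,
      Par n₁ ∈ (finite_HTle (m := m) (N := N) γ).toFinset := by
    intro n₁ hn₁
    rw [Set.Finite.mem_toFinset] at hn₁ ⊢
    exact Par_mem_HTset hn₁.1
  rw [← Finset.sum_fiberwise_of_maps_to hmap
    (fun n₁ => ∏ p ∈ SP m N, (Nat.choose (n p).toNat ((n₁ p).toNat) : ℝ))]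
  refine Finset.sum_congr rfl fun ω hω => ?_
  exact fiber_sum_eq γ n ((Set.Finite.mem_toFinset _).mp hω)

lemma ht_sum_shift (γ : OEdge m → ℤ) (n q : OPlaq m → ℤ) (hq : q ∈ CurSet m N γ)
    (hqn : leOn m N q n) :
    ∑ ω ∈ (finite_HTle (m := m) (N := N) γ).toFinset, ∏ p ∈ SP m N, hfun n p (ω p)
      = ∑ ω ∈ (finite_HTle (m := m) (N := N) (0 : OEdge m → ℤ)).toFinset,
          ∏ p ∈ SP m N, hfun n p (ω p) := by
  classical
  have hPq : Par q ∈ HTset m N γ := Par_mem_HTset hq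
  have hflip : ∀ (ωv : ZMod 2) (p : OPlaq m), p ∈ SP m N →
      hfun n p ωv = hfun n p (ωv + Par q p) := by
    intro ωv p hp
    rcases zmod2_cases (Par q p) with h0 | h1
    · rw [h0, add_zero]
    · have hq0 : q p ≠ 0 := by
        intro h
        have : Par q p = 0 := by simp [Par, h]
        rw [this] at h1
        exact absurd h1 (by decide)
      have hqpos : 0 ≤ q p := hq.1.2.2 p (mem_SP.mp hp)
      have hn1 : 1 ≤ n p := le_trans (by omega) (hqn p (mem_SP.mp hp))
      rw [h1]
      exact hfun_flip hn1 ωv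
  refine Finset.sum_nbij' (i := fun ω => fun p => ω p + Par q p)
    (j := fun ω => fun p => ω p + Par q p) ?_ ?_ ?_ ?_ ?_
  · intro ω hω
    rw [Set.Finite.mem_toFinset] at hω ⊢
    exact add_mem_HTset_zero hω hPq
  · intro ω hω
    rw [Set.Finite.mem_toFinset] at hω ⊢
    exact add_mem_HTset_gamma hω hPq
  · intro ω _
    funext p
    show (ω p + Par q p) + Par q p = ω p
    rw [add_assoc, zmod2_add_self, add_zero]
  · intro ω _
    funext p
    show (ω p + Par q p) + Par q p = ω p
    rw [add_assoc, zmod2_add_self, add_zero]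
  · intro ω _
    exact Finset.prod_congr rfl fun p hp => hflip (ω p) p hp

end SwitchingFinal
/-- **Switching identity for a fixed total current** (equation (5.4)). -/
theorem switching_fixed_current (m N : ℕ) (hm : 3 ≤ m) (hN : 1 ≤ N)
    (γ₁ γ₂ γ₁₂ : OEdge m → ℤ)
    (h₁ : LoopIn m N γ₁) (h₂ : LoopIn m N γ₂) (h₁₂ : LoopIn m N γ₁₂)
    (hcat : ∀ e, ((γ₁₂ e : ZMod 2)) = (γ₁ e : ZMod 2) + (γ₂ e : ZMod 2))
    (n : OPlaq m → ℤ) (hn : n ∈ CurSet m N γ₁₂) :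
    (∑ᶠ n₁ ∈ {n₁ : OPlaq m → ℤ | n₁ ∈ CurSet m N γ₁ ∧ leOn m N n₁ n},
        ∏ᶠ p ∈ C2plus m N, (Nat.choose (n p).toNat ((n₁ p).toNat) : ℝ))
      = (if ∃ q ∈ CurSet m N γ₁, leOn m N q n then (1 : ℝ) else 0) *
          ∑ᶠ n₁ ∈ {n₁ : OPlaq m → ℤ | n₁ ∈ CurSet m N (0 : OEdge m → ℤ) ∧ leOn m N n₁ n},
            ∏ᶠ p ∈ C2plus m N, (Nat.choose (n p).toNat ((n₁ p).toNat) : ℝ) := by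
  have hconv : ∀ γ : OEdge m → ℤ,
      (∑ᶠ n₁ ∈ {n₁ : OPlaq m → ℤ | n₁ ∈ CurSet m N γ ∧ leOn m N n₁ n},
        ∏ᶠ p ∈ C2plus m N, (Nat.choose (n p).toNat ((n₁ p).toNat) : ℝ))
      = ∑ n₁ ∈ (finite_curle (m := m) (N := N) γ n).toFinset,
          ∏ p ∈ SP m N, (Nat.choose (n p).toNat ((n₁ p).toNat) : ℝ) := by
    intro γ
    rw [← finsum_mem_coe_finset, Set.Finite.coe_toFinset]
    refine finsum_mem_congr rfl fun n₁ _ => ?_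
    rw [← finprod_mem_coe_finset, coe_SP]
  by_cases hex : ∃ q ∈ CurSet m N γ₁, leOn m N q n
  · obtain ⟨q, hq, hqn⟩ := hex
    rw [if_pos ⟨q, hq, hqn⟩, one_mul, hconv γ₁, hconv 0, cur_sum_eq γ₁ n, cur_sum_eq 0 n,
      ht_sum_shift γ₁ n q hq hqn]
  · rw [if_neg hex, zero_mul]
    have hempty : {n₁ : OPlaq m → ℤ | n₁ ∈ CurSet m N γ₁ ∧ leOn m N n₁ n} = ∅ :=
      Set.eq_empty_iff_forall_notMem.mpr fun n₁ hn₁ => hex ⟨n₁, hn₁.1, hn₁.2⟩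
    rw [hempty, finsum_mem_empty]

end LGT
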